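/- Let α, β, x, y : ℕ → ℕ with β(n) ≥ 1 and y(n) ≥ 1 for all n ≥ 1, and adopt the convention α(0) = x(0) = 0. Then ∏_{k=1}^{n} β(k)^{α(⌊n/k⌋)} = ∏_{k=1}^{n} y(k)^{x(⌊n/k⌋)} holds for every n ≥ 1 if and only if for every n ≥ 1 one has ∑_{d ∣ n} (α(n/d) − α(n/d − 1))·log β(d) = ∑_{d ∣ n} (x(n/d) − x(n/d − 1))·log y(d), where the differences are taken in ℤ and the sums are over the positive divisors d of n. (In other words, (α,β) and (x,y) generate the same factorials if and only if Δα ⋆ Log(β) = Δx ⋆ Log(y), where ⋆ is Dirichlet convolution, Δα(n) = α(n) − α(n−1), and Log(β)(n) = log β(n).) -/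

import Mathlib

open Finset

noncomputable def Lsum (α β : ℕ → ℕ) (n : ℕ) : ℝ :=
  ∑ k ∈ Finset.Icc 1 n, (α (n / k) : ℝ) * Real.log (β k)

lemma prod_pos_aux (α β : ℕ → ℕ) (hβ : ∀ n, 1 ≤ n → 1 ≤ β n) (n : ℕ) :
    1 ≤ ∏ k ∈ Finset.Icc 1 n, β k ^ α (n / k) := by
  apply Finset.one_le_prod'
  intro k hk
  exact Nat.one_le_pow _ _ (hβ k (Finset.mem_Icc.mp hk).1)

lemma log_prod_aux (α β : ℕ → ℕ) (hβ : ∀ n, 1 ≤ n → 1 ≤ β n) (n : ℕ) :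
    Real.log ((∏ k ∈ Finset.Icc 1 n, β k ^ α (n / k) : ℕ) : ℝ) = Lsum α β n := by
  rw [Nat.cast_prod, Real.log_prod]
  · unfold Lsum
    refine Finset.sum_congr rfl fun k hk => ?_
    rw [Nat.cast_pow, Real.log_pow]
  · intro k hk
    have : 1 ≤ β k := hβ k (Finset.mem_Icc.mp hk).1
    positivity

lemma Lsum_diff (α β : ℕ → ℕ) (hα0 : α 0 = 0) (n : ℕ) (hn : 1 ≤ n) :
    Lsum α β n - Lsum α β (n - 1) =
      ∑ d ∈ n.divisors, (((α (n / d) : ℤ) - (α (n / d - 1) : ℤ) : ℤ) : ℝ) *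
        Real.log (β d) := by
  obtain ⟨m, rfl⟩ := Nat.exists_eq_add_of_le hn
  simp only [Nat.add_sub_cancel_left] at *
  have h1 : Lsum α β m = ∑ k ∈ Finset.Icc 1 (1 + m), (α (m / k) : ℝ) * Real.log (β k) := by
    unfold Lsum
    rw [show 1 + m = m + 1 by ring, Finset.sum_Icc_succ_top (by omega)]
    rw [Nat.div_eq_of_lt (by omega), hα0]
    simp
  rw [h1]
  unfold Lsum
  rw [← Finset.sum_sub_distrib]
  have h2 : ∀ k ∈ Finset.Icc 1 (1 + m),
      (α ((1 + m) / k) : ℝ) * Real.log (β k) - (α (m / k) : ℝ) * Real.log (β k) =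
        if k ∣ (1 + m) then
          (((α ((1 + m) / k) : ℤ) - (α ((1 + m) / k - 1) : ℤ) : ℤ) : ℝ) * Real.log (β k)
        else 0 := by
    intro k hk
    have hk1 : 1 ≤ k := (Finset.mem_Icc.mp hk).1
    by_cases hd : k ∣ (1 + m)
    · rw [if_pos hd]
      have : (1 + m) / k = m / k + 1 := by
        rw [show 1 + m = m + 1 by ring] at hd ⊢
        exact Nat.succ_div_of_dvd hd
      rw [this]
      push_cast
      ring
    · rw [if_neg hd]
      have : (1 + m) / k = m / k := by
        rw [show 1 + m = m + 1 by ring] at hd ⊢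
        rw [Nat.succ_div, if_neg hd, add_zero]
      rw [this]
      ring
  rw [Finset.sum_congr rfl h2, Finset.sum_ite, Finset.sum_const_zero, add_zero]
  apply Finset.sum_congr _ (fun _ _ => rfl)
  ext d
  simp only [Finset.mem_filter, Finset.mem_Icc, Nat.mem_divisors]
  constructor
  · rintro ⟨⟨h1, _⟩, hd⟩
    exact ⟨hd, by omega⟩
  · rintro ⟨hd, hne⟩
    have := Nat.le_of_dvd (by omega) hd
    exact ⟨⟨Nat.pos_of_dvd_of_pos hd (by omega), this⟩, hd⟩

lemma telescope_aux (F G : ℕ → ℝ) (hF0 : F 0 = 0) (hG0 : G 0 = 0) :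
    (∀ n, 1 ≤ n → F n = G n) ↔
      (∀ n, 1 ≤ n → F n - F (n - 1) = G n - G (n - 1)) := by
  constructor
  · intro h n hn
    have hn' : F n = G n := h n hn
    rcases Nat.eq_or_lt_of_le hn with h1 | h1
    · subst h1
      simp [hF0, hG0, hn']
    · rw [hn', h (n - 1) (by omega)]
  · intro h n hn
    induction n with
    | zero => omega
    | succ m ih =>
      have := h (m + 1) (by omega)
      simp only [Nat.add_sub_cancel] at this
      rcases Nat.eq_zero_or_pos m with rfl | hm
      · simpa [hF0, hG0] using this
      · have := ih hm
        linarith [h (m + 1) (by omega), ih hm]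

theorem stmt_13 (α β x y : ℕ → ℕ)
    (hβ : ∀ n, 1 ≤ n → 1 ≤ β n) (hy : ∀ n, 1 ≤ n → 1 ≤ y n)
    (hα0 : α 0 = 0) (hx0 : x 0 = 0) :
    (∀ n, 1 ≤ n →
        ∏ k ∈ Finset.Icc 1 n, β k ^ α (n / k) =
          ∏ k ∈ Finset.Icc 1 n, y k ^ x (n / k)) ↔
      (∀ n, 1 ≤ n →
        ∑ d ∈ n.divisors, (((α (n / d) : ℤ) - (α (n / d - 1) : ℤ) : ℤ) : ℝ) *
            Real.log (β d) =
          ∑ d ∈ n.divisors, (((x (n / d) : ℤ) - (x (n / d - 1) : ℤ) : ℤ) : ℝ) *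
            Real.log (y d)) := by
  have step1 : (∀ n, 1 ≤ n →
      ∏ k ∈ Finset.Icc 1 n, β k ^ α (n / k) =
        ∏ k ∈ Finset.Icc 1 n, y k ^ x (n / k)) ↔
      (∀ n, 1 ≤ n → Lsum α β n = Lsum x y n) := by
    constructor
    · intro h n hn
      rw [← log_prod_aux α β hβ n, ← log_prod_aux x y hy n, h n hn]
    · intro h n hn
      have hl := h n hn
      rw [← log_prod_aux α β hβ n, ← log_prod_aux x y hy n] at hl
      have h1 := prod_pos_aux α β hβ n
      have h2 := prod_pos_aux x y hy n
      have := Real.log_injOn_pos (Set.mem_Ioi.mpr (by exact_mod_cast Nat.lt_of_lt_of_le zero_lt_one h1))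
        (Set.mem_Ioi.mpr (by exact_mod_cast Nat.lt_of_lt_of_le zero_lt_one h2)) hl
      exact_mod_cast this
  rw [step1, telescope_aux (Lsum α β) (Lsum x y) (by simp [Lsum]) (by simp [Lsum])]
  constructor
  · intro h n hn
    rw [← Lsum_diff α β hα0 n hn, ← Lsum_diff x y hx0 n hn, h n hn]
  · intro h n hn
    rw [Lsum_diff α β hα0 n hn, Lsum_diff x y hx0 n hn, h n hn]
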